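/- Let q be a prime power and g ∈ SL₂(F_q) be diagonalizable over F_q with an eigenvalue λ ∈ F_q \ {±1} of multiplicative order o. Then the permutation ḡ ∈ PSL₂(q) of the projective line P¹(F_q) has exactly two fixed points, and every other cycle of ḡ has length o/2 if o is even and length o if o is odd. -/

import Mathlib

open Matrix (mulVec)
open scoped Matrix

/-- The permutation of the projective line `ℙ¹(F)` induced by an element of `SL₂(F)`. -/
noncomputable def SL2.projAction {F : Type} [Field F]
    (g : Matrix.SpecialLinearGroup (Fin 2) F) :
    Projectivization F (Fin 2 → F) → Projectivization F (Fin 2 → F) :=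
  Projectivization.map (Matrix.SpecialLinearGroup.toLin' g).toLinearMap
    (Matrix.SpecialLinearGroup.toLin' g).injective

/-- Cayley–Hamilton for 2×2 matrices of determinant one, in `mulVec` form. -/
lemma CH2' {F : Type} [Field F] (A : Matrix (Fin 2) (Fin 2) F) (hd : A.det = 1) (u : Fin 2 → F) :
    A *ᵥ (A *ᵥ u) = A.trace • (A *ᵥ u) - u := by
  have h : A * A - A.trace • A + A.det • (1 : Matrix (Fin 2) (Fin 2) F) = 0 := by
    ext i j
    fin_cases i <;> fin_cases j <;>
      simp [Matrix.mul_apply, Fin.sum_univ_two, Matrix.trace_fin_two, Matrix.det_fin_two,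
        Matrix.one_apply] <;> ring
  have h2 := congrArg (fun M => M *ᵥ u) h
  simp only [Matrix.add_mulVec, Matrix.sub_mulVec, Matrix.smul_mulVec, hd,
    Matrix.one_mulVec, Matrix.zero_mulVec, one_smul, ← Matrix.mulVec_mulVec] at h2
  linear_combination (norm := module) h2

/-- Two linearly independent vectors span `F²`. -/
lemma span2' {F : Type} [Field F] (v w : Fin 2 → F)
    (h : LinearIndependent F ![v, w]) (u : Fin 2 → F) :
    ∃ a b : F, u = a • v + b • w := by
  have hcard : Fintype.card (Fin 2) = Module.finrank F (Fin 2 → F) := by simp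
  let B := basisOfLinearIndependentOfCardEqFinrank h hcard
  have hB : ⇑B = ![v, w] := coe_basisOfLinearIndependentOfCardEqFinrank h hcard
  have := B.sum_repr u
  rw [Fin.sum_univ_two, hB] at this
  exact ⟨B.repr u 0, B.repr u 1, by simpa using this.symm⟩

theorem sl2_split_semisimple_cycle_structure
    (F : Type) [Field F] [Fintype F]
    (g : Matrix.SpecialLinearGroup (Fin 2) F) (lam : F)
    (hlam1 : lam ≠ 1) (hlam2 : lam ≠ -1)
    (heig : Module.End.HasEigenvalue
      (Matrix.toLin' (g : Matrix (Fin 2) (Fin 2) F)) lam) :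
    (∃ a b : Projectivization F (Fin 2 → F), a ≠ b ∧
      (∀ x, SL2.projAction g x = x ↔ x = a ∨ x = b)) ∧
    (∀ x : Projectivization F (Fin 2 → F), SL2.projAction g x ≠ x →
      Function.minimalPeriod (SL2.projAction g) x =
        if Even (orderOf lam) then orderOf lam / 2 else orderOf lam) := by
  set A : Matrix (Fin 2) (Fin 2) F := (g : Matrix (Fin 2) (Fin 2) F) with hAdef
  have hd : A.det = 1 := g.2
  -- eigenvector for lam
  obtain ⟨v, hvmem⟩ := heig.exists_hasEigenvector
  have hv0 : v ≠ 0 := hvmem.2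
  have hv : A *ᵥ v = lam • v := by
    rw [← Matrix.toLin'_apply]; exact hvmem.apply_eq_smul
  -- the trace relation
  have hkey : lam * lam - A.trace * lam + 1 = 0 := by
    have e2 : A *ᵥ (A *ᵥ v) = (lam * lam) • v := by
      rw [hv, Matrix.mulVec_smul, hv, smul_smul]
    have key0 : (lam * lam) • v = A.trace • (lam • v) - v := by
      rw [← e2, CH2' A hd v, hv]
    have h5 : (lam * lam - A.trace * lam + 1) • v = 0 := by
      linear_combination (norm := module) key0
    rcases smul_eq_zero.mp h5 with h | h
    · exact h
    · exact absurd h hv0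
  have hl0 : lam ≠ 0 := by
    intro h; rw [h] at hkey; simp at hkey
  set mu : F := lam⁻¹ with hmudef
  have hlm : lam * mu = 1 := mul_inv_cancel₀ hl0
  have hmu0 : mu ≠ 0 := inv_ne_zero hl0
  have hsq : lam * lam ≠ 1 := by
    intro h; rcases mul_self_eq_one_iff.mp h with h | h
    · exact hlam1 h
    · exact hlam2 h
  have hm : lam ≠ mu := by
    intro h; exact hsq (by rw [← hlm, h])
  have ht : A.trace = lam + mu := by
    rw [hmudef]
    field_simp
    linear_combination -hkey
  -- eigenvector for mu
  have hex : ∃ u, A *ᵥ u ≠ lam • u := by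
    by_contra h
    push_neg at h
    have hA : A = lam • (1 : Matrix (Fin 2) (Fin 2) F) := by
      ext i j
      have h1 := congrFun (h (Pi.single j 1)) i
      simpa [Matrix.mulVec_single, Matrix.one_apply, Pi.single_apply, mul_comm] using h1
    rw [hA] at hd
    simp [Matrix.det_smul, pow_two] at hd
    exact hsq hd
  obtain ⟨w0, hw0ne⟩ := hex
  set w : Fin 2 → F := A *ᵥ w0 - lam • w0 with hwdef
  have hw0 : w ≠ 0 := sub_ne_zero.mpr hw0ne
  have hw : A *ᵥ w = mu • w := by
    rw [hwdef, Matrix.mulVec_sub, Matrix.mulVec_smul, CH2' A hd w0, ht]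
    match_scalars <;> field_simp
    · ring
    · linear_combination hlm
  -- linear independence
  have hcomb : ∀ a b : F, a • v + b • w = 0 → a = 0 ∧ b = 0 := by
    intro a b h
    have h2 : (a * lam) • v + (b * mu) • w = 0 := by
      have h' := congrArg (fun y => A *ᵥ y) h
      simp only [Matrix.mulVec_add, Matrix.mulVec_smul, hv, hw, Matrix.mulVec_zero] at h'
      linear_combination (norm := module) h'
    have h3 : (lam * a) • v + (lam * b) • w = 0 := by
      have h' := congrArg (fun y => lam • y) h
      simp only [smul_add, smul_smul, smul_zero] at h'
      linear_combination (norm := module) h'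
    have h4 : ((lam - mu) * b) • w = 0 := by
      linear_combination (norm := module) h3 - h2
    have hb : b = 0 := by
      rcases smul_eq_zero.mp h4 with h' | h'
      · rcases mul_eq_zero.mp h' with h'' | h''
        · exact absurd h'' (sub_ne_zero.mpr hm)
        · exact h''
      · exact absurd h' hw0
    refine ⟨?_, hb⟩
    rw [hb, zero_smul, add_zero] at h
    rcases smul_eq_zero.mp h with h' | h'
    · exact h'
    · exact absurd h' hv0
  have hli : LinearIndependent F ![v, w] := LinearIndependent.pair_iff.mpr hcomb
  have hnz : ∀ a b : F, (a ≠ 0 ∨ b ≠ 0) → a • v + b • w ≠ 0 := by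
    intro a b hab h
    obtain ⟨h1, h2⟩ := hcomb a b h
    rcases hab with h' | h' <;> [exact h' h1; exact h' h2]
  -- projective action on mk
  have hAne : ∀ u : Fin 2 → F, u ≠ 0 → A *ᵥ u ≠ 0 := by
    intro u hu h0
    apply hu
    have h1 : (Matrix.SpecialLinearGroup.toLin' g) u = 0 := by
      rw [Matrix.SpecialLinearGroup.toLin'_apply, Matrix.toLin'_apply]; exact h0
    exact (LinearEquiv.map_eq_zero_iff _).mp h1
  have hpa' : ∀ (u u' : Fin 2 → F) (hu : u ≠ 0) (hu' : u' ≠ 0), A *ᵥ u = u' →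
      SL2.projAction g (Projectivization.mk F u hu) = Projectivization.mk F u' hu' := by
    intro u u' hu hu' h
    rw [SL2.projAction, Projectivization.map_mk, Projectivization.mk_eq_mk_iff']
    exact ⟨1, by rw [one_smul]; exact h.symm⟩
  have hAact : ∀ a b : F, A *ᵥ (a • v + b • w) = (a * lam) • v + (b * mu) • w := by
    intro a b
    rw [Matrix.mulVec_add, Matrix.mulVec_smul, Matrix.mulVec_smul, hv, hw]
    module
  set va : Projectivization F (Fin 2 → F) := Projectivization.mk F v hv0 with hvadef
  set wa : Projectivization F (Fin 2 → F) := Projectivization.mk F w hw0 with hwadef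
  have hfixv : SL2.projAction g va = va := by
    rw [hvadef, hpa' v (lam • v) hv0 (smul_ne_zero hl0 hv0) hv, Projectivization.mk_eq_mk_iff']
    exact ⟨lam, rfl⟩
  have hfixw : SL2.projAction g wa = wa := by
    rw [hwadef, hpa' w (mu • w) hw0 (smul_ne_zero hmu0 hw0) hw, Projectivization.mk_eq_mk_iff']
    exact ⟨mu, rfl⟩
  have hne_ab : va ≠ wa := by
    intro h
    obtain ⟨c, hc⟩ := (Projectivization.mk_eq_mk_iff' F _ _ hv0 hw0).mp h
    have h0 : (1 : F) • v + (-c) • w = 0 := by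
      rw [one_smul, neg_smul, ← hc]; abel
    exact one_ne_zero (hcomb 1 (-c) h0).1
  have hfix : ∀ x, SL2.projAction g x = x ↔ x = va ∨ x = wa := by
    intro x
    induction x using Projectivization.ind with
    | h u hu =>
      obtain ⟨a, b, rfl⟩ := span2' v w hli u
      constructor
      · intro hfx
        have hab : a ≠ 0 ∨ b ≠ 0 := by
          by_contra hcon
          push_neg at hcon
          exact hu (by rw [hcon.1, hcon.2, zero_smul, zero_smul, add_zero])
        rw [hpa' _ _ hu (hnz _ _ (hab.imp (fun h' => mul_ne_zero h' hl0)
            (fun h' => mul_ne_zero h' hmu0))) (hAact a b),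
          Projectivization.mk_eq_mk_iff'] at hfx
        obtain ⟨c, hc⟩ := hfx
        have h0 : (c * a - a * lam) • v + (c * b - b * mu) • w = 0 := by
          linear_combination (norm := module) hc
        obtain ⟨h1, h2⟩ := hcomb _ _ h0
        by_cases ha : a = 0
        · right
          subst ha
          rw [Projectivization.mk_eq_mk_iff']
          exact ⟨b, by rw [zero_smul, zero_add]⟩
        · by_cases hb : b = 0
          · left
            subst hb
            rw [Projectivization.mk_eq_mk_iff']
            exact ⟨a, by rw [zero_smul, add_zero]⟩
          · exfalso
            have hc1 : c = lam := mul_left_cancel₀ ha (by linear_combination h1)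
            have hc2 : c = mu := mul_left_cancel₀ hb (by linear_combination h2)
            exact hm (hc1 ▸ hc2)
      · rintro (h | h) <;> rw [h]
        · exact hfixv
        · exact hfixw
  refine ⟨⟨va, wa, hne_ab, hfix⟩, ?_⟩
  intro x hx
  induction x using Projectivization.ind with
  | h u hu =>
    obtain ⟨a, b, rfl⟩ := span2' v w hli u
    have hxa : ¬(Projectivization.mk F _ hu = va ∨ Projectivization.mk F _ hu = wa) := by
      intro h; exact hx ((hfix _).mpr h)
    push_neg at hxa
    have ha : a ≠ 0 := by
      intro h0
      apply hxa.2
      rw [Projectivization.mk_eq_mk_iff']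
      exact ⟨b, by rw [h0, zero_smul, zero_add]⟩
    have hb : b ≠ 0 := by
      intro h0
      apply hxa.1
      rw [Projectivization.mk_eq_mk_iff']
      exact ⟨a, by rw [h0, zero_smul, add_zero]⟩
    have hnzn : ∀ n : ℕ, (a * lam ^ n) • v + (b * mu ^ n) • w ≠ 0 :=
      fun n => hnz _ _ (Or.inl (mul_ne_zero ha (pow_ne_zero _ hl0)))
    have hiter : ∀ n : ℕ, (SL2.projAction g)^[n] (Projectivization.mk F _ hu) =
        Projectivization.mk F ((a * lam ^ n) • v + (b * mu ^ n) • w) (hnzn n) := by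
      intro n
      induction n with
      | zero =>
        rw [Function.iterate_zero_apply, Projectivization.mk_eq_mk_iff']
        exact ⟨1, by rw [one_smul, pow_zero, pow_zero, mul_one, mul_one]⟩
      | succ n ih =>
        have hstep : A *ᵥ ((a * lam ^ n) • v + (b * mu ^ n) • w) =
            (a * lam ^ (n + 1)) • v + (b * mu ^ (n + 1)) • w := by
          rw [hAact]
          module
        rw [Function.iterate_succ_apply', ih, hpa' _ _ (hnzn n) (hnzn (n + 1)) hstep]
    have hper : ∀ n : ℕ, Function.IsPeriodicPt (SL2.projAction g) n
        (Projectivization.mk F _ hu) ↔ lam ^ (2 * n) = 1 := by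
      intro n
      have hiff : Function.IsPeriodicPt (SL2.projAction g) n (Projectivization.mk F _ hu) ↔
          (SL2.projAction g)^[n] (Projectivization.mk F _ hu) = Projectivization.mk F _ hu :=
        Iff.rfl
      rw [hiff, hiter n, Projectivization.mk_eq_mk_iff']
      have hlmn : lam ^ n * mu ^ n = 1 := by rw [← mul_pow, hlm, one_pow]
      constructor
      · rintro ⟨c, hc⟩
        have h0 : (c * a - a * lam ^ n) • v + (c * b - b * mu ^ n) • w = 0 := by
          linear_combination (norm := module) hc
        obtain ⟨h1, h2⟩ := hcomb _ _ h0
        have hc1 : c = lam ^ n := mul_left_cancel₀ ha (by linear_combination h1)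
        have hc2 : c = mu ^ n := mul_left_cancel₀ hb (by linear_combination h2)
        have heqn : lam ^ n = mu ^ n := hc1 ▸ hc2
        rw [two_mul, pow_add]
        linear_combination lam ^ n * heqn + hlmn
      · intro h1
        rw [two_mul, pow_add] at h1
        have hmun : mu ^ n = lam ^ n :=
          mul_left_cancel₀ (pow_ne_zero n hl0) (by rw [hlmn, h1])
        refine ⟨lam ^ n, ?_⟩
        rw [hmun]
        module
    have hfin : IsOfFinOrder lam := by
      refine isOfFinOrder_iff_pow_eq_one.mpr
        ⟨Fintype.card F - 1, ?_, FiniteField.pow_card_sub_one_eq_one lam hl0⟩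
      have : 1 < Fintype.card F := Fintype.one_lt_card
      omega
    have ho : 0 < orderOf lam := hfin.orderOf_pos
    set m : ℕ := if Even (orderOf lam) then orderOf lam / 2 else orderOf lam with hmdef
    have hod : ∀ n : ℕ, orderOf lam ∣ 2 * n ↔ m ∣ n := by
      intro n
      constructor
      · intro hdv
        by_cases h : Even (orderOf lam)
        · rw [hmdef, if_pos h]
          have h2 : 2 * (orderOf lam / 2) ∣ 2 * n := by
            rwa [Nat.two_mul_div_two_of_even h]
          exact (mul_dvd_mul_iff_left (two_ne_zero)).mp h2
        · rw [hmdef, if_neg h]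
          have hodd : Odd (orderOf lam) := Nat.not_even_iff_odd.mp h
          refine hodd.coprime_two_right.dvd_of_dvd_mul_right ?_
          rwa [mul_comm] at hdv
      · intro hdv
        have h2 : orderOf lam ∣ 2 * m := by
          by_cases h : Even (orderOf lam)
          · rw [hmdef, if_pos h, Nat.two_mul_div_two_of_even h]
          · rw [hmdef, if_neg h]
            exact dvd_mul_left _ 2
        exact h2.trans (mul_dvd_mul_left 2 hdv)
    have key : ∀ n : ℕ, Function.IsPeriodicPt (SL2.projAction g) n
        (Projectivization.mk F _ hu) ↔ m ∣ n := by
      intro n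
      rw [hper n, ← orderOf_dvd_iff_pow_eq_one, hod n]
    have hp1 : Function.IsPeriodicPt (SL2.projAction g) m (Projectivization.mk F _ hu) :=
      (key m).mpr dvd_rfl
    have h2 := hp1.minimalPeriod_dvd
    have h3 : m ∣ Function.minimalPeriod (SL2.projAction g) (Projectivization.mk F _ hu) :=
      (key _).mp (Function.isPeriodicPt_minimalPeriod _ _)
    exact Nat.dvd_antisymm h2 h3
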